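/- Let K be a field of characteristic 2, A = K[x^{±1}, y^{±1}], U the 2×2 matrix over A with rows (0, 1) and (y, 0), and V the 2×2 matrix with rows (1, x⁻¹y⁻¹) and (x⁻¹, 1). If F ∈ M₂(A) satisfies tr(VF) = 0 and at(VF) = 0, then tr(F) = 0 and at(F) = 0, and consequently UF = FU. -/

import Mathlib

noncomputable section

/-- The Laurent polynomial ring `K[x^{±1}, y^{±1}]`. -/
abbrev LaurentTwo (K : Type*) [Field K] := AddMonoidAlgebra K (ℤ × ℤ)

/-- The monomial `x^i y^j` in `K[x^{±1}, y^{±1}]`. -/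
def mon (K : Type*) [Field K] (i j : ℤ) : LaurentTwo K := AddMonoidAlgebra.single (i, j) 1

/-- The matrix `U = [[0, 1], [y, 0]]`. -/
def Umat (K : Type*) [Field K] : Matrix (Fin 2) (Fin 2) (LaurentTwo K) :=
  !![0, 1; mon K 0 1, 0]

/-- The matrix `V = [[1, x⁻¹y⁻¹], [x⁻¹, 1]]`. -/
def Vmat (K : Type*) [Field K] : Matrix (Fin 2) (Fin 2) (LaurentTwo K) :=
  !![1, mon K (-1) (-1); mon K (-1) 0, 1]

/-- `tr(F) = a + d` for `F = [[a,b],[c,d]]`. -/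
def trF {K : Type*} [Field K] (F : Matrix (Fin 2) (Fin 2) (LaurentTwo K)) : LaurentTwo K :=
  F 0 0 + F 1 1

/-- `at(F) = yb + c` for `F = [[a,b],[c,d]]`. -/
def atF {K : Type*} [Field K] (F : Matrix (Fin 2) (Fin 2) (LaurentTwo K)) : LaurentTwo K :=
  mon K 0 1 * F 0 1 + F 1 0

/-- If `tr(VF) = 0` and `at(VF) = 0`, then `tr(F) = 0` and
`at(F) = 0`, and consequently `UF = FU`. -/
theorem trat_VF_zero (K : Type*) [Field K] [CharP K 2]
    (F : Matrix (Fin 2) (Fin 2) (LaurentTwo K))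
    (htr : trF (Vmat K * F) = 0) (hat : atF (Vmat K * F) = 0) :
    trF F = 0 ∧ atF F = 0 ∧ Umat K * F = F * Umat K := by
  have hm : mon K (-1) (-1) * mon K 0 1 = mon K (-1) 0 := by
    simp [mon, AddMonoidAlgebra.single_mul_single]
  have hnm : mon K (-1) 0 * mon K (-1) (-1) = mon K (-2) (-1) := by
    simp [mon, AddMonoidAlgebra.single_mul_single]
  haveI : CharP (LaurentTwo K) 2 :=
    charP_of_injective_algebraMap (algebraMap K (LaurentTwo K)).injective 2
  have h2z : (2 : LaurentTwo K) = 0 := by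
    exact_mod_cast CharP.cast_eq_zero (LaurentTwo K) 2
  have h1 : trF F + mon K (-1) (-1) * atF F = 0 := by
    simp [trF, atF, Vmat, Matrix.mul_apply, Fin.sum_univ_two] at htr ⊢
    linear_combination htr + F 0 1 * hm
  have h2 : atF F + mon K (-1) 0 * trF F = 0 := by
    simp [trF, atF, Vmat, Matrix.mul_apply, Fin.sum_univ_two] at hat ⊢
    linear_combination hat + F 1 1 * hm + (mon K (-1) 0 * F 1 1 - mon K 0 1 * mon K (-1) (-1) * F 1 1) * h2z
  have hs : atF F * (1 - mon K (-2) (-1)) = 0 := by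
    linear_combination h2 - mon K (-1) 0 * h1 - atF F * hnm + (atF F * mon K (-1) 0 * mon K (-1) (-1) - atF F * mon K (-2) (-1)) * h2z
  have hne : (1 : LaurentTwo K) - mon K (-2) (-1) ≠ 0 := by
    refine sub_ne_zero.mpr ?_
    rw [AddMonoidAlgebra.one_def, mon]
    intro h
    rcases AddMonoidAlgebra.single_inj.1 h with ⟨h', -⟩ | ⟨h1, -⟩
    · exact absurd h' (by decide)
    · exact one_ne_zero h1
  have hs0 : atF F = 0 := by
    rcases mul_eq_zero.1 hs with h | h
    · exact h
    · exact absurd h hne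
  have ht0 : trF F = 0 := by
    linear_combination h1 + mon K (-1) (-1) * hs0 - mon K (-1) (-1) * atF F * h2z
  refine ⟨ht0, hs0, ?_⟩
  have ht : F 0 0 + F 1 1 = 0 := ht0
  have ha : mon K 0 1 * F 0 1 + F 1 0 = 0 := hs0
  refine Matrix.ext fun i j => ?_
  fin_cases i <;> fin_cases j <;>
    simp [Umat, Matrix.mul_apply, Fin.sum_univ_two] <;>
    first
      | linear_combination ha - mon K 0 1 * F 0 1 * h2z
      | linear_combination ht - F 0 0 * h2z
      | linear_combination mon K 0 1 * ht - mon K 0 1 * F 1 1 * h2z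
      | linear_combination ha - F 1 0 * h2z

end
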